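/- Let P' be a large-tree forcing notion, n < ω, and P an n-collage over P'. Suppose S, T ∈ P', s, t ∈ 2^n, S ⊆ P→(s⌢0), T ⊆ P→(t⌢1), σ ∈ 2^{<ω}, and T = σ·S. Then there is an (n+1)-collage Q over P' with Q ⊆_{n+1} P such that Q→(s⌢0) ⊆ S and Q→(t⌢1) ⊆ T. -/

import Mathlib

namespace E0L

/-- Finite binary strings `2^{<ω}`. -/
abbrev Str : Type := List Bool

/-- Sets of binary strings (in particular, trees). -/
abbrev Tr : Type := Set Str

/-- The action `s·t` of a string on a string:
`(s·t)(k) = t(k) + s(k) mod 2` for `k < min(|s|,|t|)` and `(s·t)(k) = t(k)` otherwise. -/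
def act (s t : Str) : Str := List.ofFn fun k : Fin t.length => Bool.xor (s.getD k false) (t.get k)

/-- The action `s·T` of a string on a set of strings. -/
def actT (s : Str) (T : Tr) : Tr := (act s) '' T

/-- `T ↾ s = {t ∈ T : s ⊆ t or t ⊆ s}`. -/
def restr (T : Tr) (s : Str) : Tr := {t ∈ T | s <+: t ∨ t <+: s}

/-- `[T]`, the set of infinite branches of `T` (as elements of Cantor space `2^ω`). -/
def branches (T : Tr) : Set (ℕ → Bool) := {x | ∀ n : ℕ, (List.ofFn fun k : Fin n => x k) ∈ T}

/-- `T[s] = {t : s ⊆ t or t ⊂ s}`. -/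
def Tbr (s : Str) : Tr := {t | s <+: t ∨ (t <+: s ∧ t ≠ s)}

/-- `LTwit T r q` : the strings `q i n` witness that `T` is an E0-large tree with stem `r`:
`|q^0_n| = |q^1_n| ≥ 1`, `q^i_n(0) = i`, and `T` consists of all initial segments of strings
of the form `r⌢q^{i(0)}_0⌢…⌢q^{i(n)}_n`. -/
def LTwit (T : Tr) (r : Str) (q : ℕ → Bool → Str) : Prop :=
  (∀ n : ℕ, (q n true).length = (q n false).length ∧ 1 ≤ (q n false).length) ∧
  (∀ n : ℕ, ∀ i : Bool, (q n i).head? = some i) ∧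
  T = {t | ∃ n : ℕ, ∃ f : ℕ → Bool,
        t <+: r ++ ((List.range (n+1)).map (fun k => q k (f k))).flatten}

/-- `T` is an E0-large tree (`T ∈ LT`). -/
def IsLT (T : Tr) : Prop := ∃ r q, LTwit T r q

/-- `stem T` : the longest `s ∈ T` with `T = T↾s`. -/
noncomputable def stem (T : Tr) : Str :=
  Classical.epsilon fun s => s ∈ T ∧ restr T s = T ∧ ∀ t ∈ T, restr T t = T → t.length ≤ s.length

/-- The canonical witness `(r, q)` of an E0-large tree. -/
noncomputable def witness (T : Tr) : Str × (ℕ → Bool → Str) :=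
  Classical.epsilon fun rq => LTwit T rq.1 rq.2

/-- Splitting levels computed from a witness: `spl_0 = |r|`, `spl_{n+1} = spl_n + |q^i_n|`. -/
def splN (r : Str) (q : ℕ → Bool → Str) : ℕ → ℕ
  | 0 => r.length
  | n+1 => splN r q n + (q n false).length

/-- `spl T n`, the `n`-th splitting level of an E0-large tree `T`. -/
noncomputable def spl (T : Tr) (n : ℕ) : ℕ := splN (witness T).1 (witness T).2 n

/-- Simple splitting `T→i = T↾(stem(T)⌢i)`. -/
noncomputable def split1 (T : Tr) (i : Bool) : Tr := restr T (stem T ++ [i])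

/-- Iterated splitting `T→s`: `T→Λ = T`, `T→(s⌢i) = (T→s)→i`. -/
noncomputable def splitS (T : Tr) (s : Str) : Tr := s.foldl split1 T

/-- `S ⊆_n T` : `S ⊆ T` and `spl_k(S) = spl_k(T)` for all `k < n`. -/
def subN (n : ℕ) (S T : Tr) : Prop := S ⊆ T ∧ ∀ k < n, spl S k = spl T k

/-- A large-tree forcing notion: a set of E0-large trees closed under restriction
and under the action of strings. -/
def IsLTF (P : Set Tr) : Prop :=
  (∀ T ∈ P, IsLT T) ∧
  (∀ T ∈ P, ∀ u ∈ T, restr T u ∈ P) ∧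
  (∀ T ∈ P, ∀ s : Str, actT s T ∈ P)

/-- `T` is an `n`-collage over `P`: `T ∈ LT` and `T→s ∈ P` for all `s ∈ 2^n`. -/
def IsCollage (P : Set Tr) (n : ℕ) (T : Tr) : Prop :=
  IsLT T ∧ ∀ s : Str, s.length = n → splitS T s ∈ P

/-- `D` is open dense in `P` (as a set of trees). -/
def OpenDense1 (P D : Set Tr) : Prop :=
  D ⊆ P ∧ (∀ S ∈ P, ∃ T ∈ D, T ⊆ S) ∧ (∀ S ∈ P, ∀ T ∈ D, S ⊆ T → S ∈ D)

/-- `⟨T,T'⟩` is a condition of the conditional product `P ×_{E0} P`. -/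
def CondPair (P : Set Tr) (p : Tr × Tr) : Prop :=
  p.1 ∈ P ∧ p.2 ∈ P ∧ ∃ s : Str, actT s p.1 = p.2

/-- Componentwise order on pairs of trees: `p ≤ q`. -/
def pleq (p q : Tr × Tr) : Prop := p.1 ⊆ q.1 ∧ p.2 ⊆ q.2

/-- Compatibility of two conditions in `P ×_{E0} P`. -/
def Compat (P : Set Tr) (p q : Tr × Tr) : Prop :=
  ∃ r : Tr × Tr, CondPair P r ∧ pleq r p ∧ pleq r q

/-- `D` is pre-dense in `P ×_{E0} P`. -/
def PreDense2 (P : Set Tr) (D : Set (Tr × Tr)) : Prop :=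
  ∀ p : Tr × Tr, CondPair P p → ∃ q ∈ D, Compat P p q

/-- `D` is open dense in `P ×_{E0} P`. -/
def OpenDense2 (P : Set Tr) (D : Set (Tr × Tr)) : Prop :=
  D ⊆ {p | CondPair P p} ∧
  (∀ p : Tr × Tr, CondPair P p → ∃ q ∈ D, pleq q p) ∧
  (∀ p : Tr × Tr, CondPair P p → ∀ q ∈ D, pleq p q → p ∈ D)

/-- A `P ×_{E0} P`-real name `c = ⟨C_n^i⟩`. -/
def IsRealName (P : Set Tr) (c : ℕ → Bool → Set (Tr × Tr)) : Prop :=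
  (∀ n : ℕ, ∀ i : Bool, c n i ⊆ {p | CondPair P p}) ∧
  (∀ n : ℕ, PreDense2 P (c n false ∪ c n true)) ∧
  (∀ n : ℕ, ∀ p ∈ c n false, ∀ q ∈ c n true, ¬ Compat P p q)

/-- `p` directly forces `c(n) = i`. -/
def DFVal (c : ℕ → Bool → Set (Tr × Tr)) (p : Tr × Tr) (n : ℕ) (i : Bool) : Prop :=
  ∃ q ∈ c n i, pleq p q

/-- `p` directly forces `s ⊂ c`. -/
def DFPrefix (c : ℕ → Bool → Set (Tr × Tr)) (p : Tr × Tr) (s : Str) : Prop :=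
  ∀ n < s.length, DFVal c p n (s.getD n false)

/-- `p` directly forces `c ∉ [U]`. -/
def DFAvoid (c : ℕ → Bool → Set (Tr × Tr)) (p : Tr × Tr) (U : Tr) : Prop :=
  ∃ s : Str, s ∉ U ∧ DFPrefix c p s

/-- `p` directly forces `c ≠ d`: there are incomparable strings `s, t` such that
`p` directly forces `s ⊂ c` and `t ⊂ d`. -/
def DFNe (c d : ℕ → Bool → Set (Tr × Tr)) (p : Tr × Tr) : Prop :=
  ∃ s t : Str, ¬ s <+: t ∧ ¬ t <+: s ∧ DFPrefix c p s ∧ DFPrefix d p t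

/-- The action `σ·c` of a string on a real name. -/
def actName (σ : Str) (c : ℕ → Bool → Set (Tr × Tr)) : ℕ → Bool → Set (Tr × Tr) :=
  fun n i => if σ.getD n false = true then c n (!i) else c n i

/-- The name `π_left` of the left generic real. -/
def piLeft : ℕ → Bool → Set (Tr × Tr) := fun n i =>
  {p | ∃ s t : Str, s.length = n+1 ∧ t.length = n+1 ∧ s.getD n false = i ∧ p = (Tbr s, Tbr t)}

/-- The name `π_right` of the right generic real. -/
def piRight : ℕ → Bool → Set (Tr × Tr) := fun n i =>
  {p | ∃ s t : Str, s.length = n+1 ∧ t.length = n+1 ∧ t.getD n false = i ∧ p = (Tbr s, Tbr t)}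



@[simp] lemma act_length (s t : Str) : (act s t).length = t.length := by
  simp [act]

lemma getD_act (s t : Str) (k : ℕ) (hk : k < t.length) :
    (act s t).getD k false = xor (s.getD k false) (t.getD k false) := by
  rw [List.getD_eq_getElem (hn := by simpa using hk), List.getD_eq_getElem (hn := hk)]
  simp [act, List.getElem_ofFn, List.get_eq_getElem]

lemma getD_long (s : Str) {k : ℕ} (h : s.length ≤ k) : s.getD k false = false := by
  rw [List.getD_eq_getElem?_getD, List.getElem?_eq_none (by simpa using h)]
  rfl

lemma ext_getD {x y : Str} (hl : x.length = y.length)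
    (h : ∀ k, x.getD k false = y.getD k false) : x = y := by
  apply List.ext_getElem hl
  intro k h1 h2
  have := h k
  rwa [List.getD_eq_getElem (hn := h1), List.getD_eq_getElem (hn := h2)] at this

lemma getD_of_prefix {x y : Str} (h : x <+: y) {k : ℕ} (hk : k < x.length) :
    x.getD k false = y.getD k false := by
  rw [List.getD_eq_getElem (hn := hk),
    List.getD_eq_getElem (hn := lt_of_lt_of_le hk h.length_le)]
  exact h.getElem hk

lemma act_ext {s s' : Str} (t : Str) (h : ∀ k, s.getD k false = s'.getD k false) :
    act s t = act s' t := by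
  refine ext_getD (by simp) fun k => ?_
  by_cases hk : k < t.length
  · rw [getD_act _ _ _ hk, getD_act _ _ _ hk, h]
  · rw [getD_long _ (by simpa using not_lt.1 hk), getD_long _ (by simpa using not_lt.1 hk)]

lemma act_zero {s : Str} (t : Str) (h : ∀ k, s.getD k false = false) : act s t = t := by
  refine ext_getD (by simp) fun k => ?_
  by_cases hk : k < t.length
  · rw [getD_act _ _ _ hk, h]; simp
  · rw [getD_long _ (by simpa using not_lt.1 hk), getD_long _ (not_lt.1 hk)]

lemma act_act_eq {c a b : Str} (t : Str)
    (h : ∀ k, c.getD k false = xor (a.getD k false) (b.getD k false)) :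
    act c t = act a (act b t) := by
  refine ext_getD (by simp) fun k => ?_
  by_cases hk : k < t.length
  · rw [getD_act _ _ _ hk, getD_act _ _ _ (by simpa using hk), getD_act _ _ _ hk, h]
    cases a.getD k false <;> cases b.getD k false <;> cases t.getD k false <;> rfl
  · rw [getD_long _ (by simpa using not_lt.1 hk), getD_long _ (by simpa using not_lt.1 hk)]

lemma act_act_self (s t : Str) : act s (act s t) = t := by
  rw [← act_act_eq t (c := ([] : Str)) (fun k => by
    rw [getD_long ([] : Str) (Nat.zero_le k)]; cases s.getD k false <;> rfl)]
  exact act_zero t (fun k => getD_long ([] : Str) (Nat.zero_le k))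

lemma getD_act' (a b : Str) (k : ℕ) (hab : a.length = b.length) :
    (act a b).getD k false = xor (a.getD k false) (b.getD k false) := by
  by_cases hk : k < b.length
  · exact getD_act a b k hk
  · rw [getD_long _ (by simpa using not_lt.1 hk), getD_long _ (not_lt.1 hk),
      getD_long a (by omega)]
    rfl

lemma act_act_self' {a b : Str} (h : a.length = b.length) : act (act a b) b = a := by
  refine ext_getD (by simp [h]) fun k => ?_
  by_cases hk : k < b.length
  · rw [getD_act _ _ _ hk, getD_act _ _ _ hk]
    cases a.getD k false <;> cases b.getD k false <;> rfl
  · rw [getD_long _ (by simpa using not_lt.1 hk), getD_long _ (h ▸ not_lt.1 hk)]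

lemma act_append {s x : Str} (y : Str) (h : s.length ≤ x.length) :
    act s (x ++ y) = act s x ++ y := by
  refine ext_getD (by simp) fun k => ?_
  by_cases hk : k < x.length
  · rw [getD_act _ _ _ (by simp; omega), List.getD_append _ _ _ _ hk,
      List.getD_append _ _ _ _ (by simpa using hk), getD_act _ _ _ hk]
  · by_cases hk2 : k < x.length + y.length
    · rw [getD_act _ _ _ (by simpa using hk2),
        List.getD_append_right _ _ _ _ (not_lt.1 hk),
        List.getD_append_right _ _ _ _ (by simpa using not_lt.1 hk),
        getD_long s (le_trans h (not_lt.1 hk))]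
      simp
    · rw [getD_long _ (by simp; omega), getD_long _ (by simp; omega)]

lemma act_prefix (s : Str) {x y : Str} (h : x <+: y) : act s x <+: act s y := by
  have hle := h.length_le
  have : act s x = (act s y).take x.length := by
    refine ext_getD (by simp; omega) fun k => ?_
    by_cases hk : k < x.length
    · rw [List.getD_eq_getElem ((act s y).take x.length) false (hn := by simp; omega),
        List.getElem_take,
        ← List.getD_eq_getElem (hn := by simpa using lt_of_lt_of_le hk hle),
        getD_act _ _ _ hk, getD_act _ _ _ (lt_of_lt_of_le hk hle),
        getD_of_prefix h hk]
    · rw [getD_long _ (by simpa using not_lt.1 hk), getD_long _ (by simp; omega)]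
  rw [this]; exact List.take_prefix _ _

lemma actT_mono (s : Str) {X Y : Tr} (h : X ⊆ Y) : actT s X ⊆ actT s Y :=
  Set.image_mono h


/-- Concatenation of the first `n` blocks. -/
def Flat (q : ℕ → Bool → Str) (f : ℕ → Bool) (n : ℕ) : Str :=
  ((List.range n).map (fun k => q k (f k))).flatten

/-- The set of strings determined by a witness. -/
def WT (r : Str) (q : ℕ → Bool → Str) : Tr :=
  {t | ∃ n f, t <+: r ++ Flat q f (n+1)}

lemma LTwit_iff {T : Tr} {r : Str} {q : ℕ → Bool → Str} :
    LTwit T r q ↔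
      (∀ n : ℕ, (q n true).length = (q n false).length ∧ 1 ≤ (q n false).length) ∧
      (∀ n : ℕ, ∀ i : Bool, (q n i).head? = some i) ∧ T = WT r q := Iff.rfl

@[simp] lemma Flat_zero (q : ℕ → Bool → Str) (f : ℕ → Bool) : Flat q f 0 = [] := by
  simp [Flat]

lemma Flat_succ (q : ℕ → Bool → Str) (f : ℕ → Bool) (n : ℕ) :
    Flat q f (n+1) = Flat q f n ++ q n (f n) := by
  simp [Flat, List.range_succ]

lemma Flat_cons (q : ℕ → Bool → Str) (f : ℕ → Bool) (n : ℕ) :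
    Flat q f (n+1) = q 0 (f 0) ++ Flat (fun k => q (k+1)) (fun k => f (k+1)) n := by
  simp only [Flat, List.range_succ_eq_map, List.map_cons, List.map_map, List.flatten_cons]
  rfl

lemma Flat_congr {q q' : ℕ → Bool → Str} {f g : ℕ → Bool} {n : ℕ}
    (h : ∀ k < n, q k (f k) = q' k (g k)) : Flat q f n = Flat q' g n := by
  unfold Flat
  congr 1
  apply List.map_congr_left
  intro k hk
  exact h k (List.mem_range.1 hk)

lemma Flat_add (q : ℕ → Bool → Str) (f : ℕ → Bool) (a b : ℕ) :
    Flat q f (a+b) = Flat q f a ++ Flat (fun k => q (k+a)) (fun k => f (k+a)) b := by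
  induction b with
  | zero => simp
  | succ b ih => rw [← Nat.add_assoc, Flat_succ, ih, Flat_succ, List.append_assoc]
      <;> simp [Nat.add_comm]

lemma Flat_mono (q : ℕ → Bool → Str) (f : ℕ → Bool) {a b : ℕ} (h : a ≤ b) :
    Flat q f a <+: Flat q f b := by
  obtain ⟨c, rfl⟩ := Nat.exists_eq_add_of_le h
  rw [Flat_add]
  exact List.prefix_append _ _

lemma prefix_append_left {x y : Str} (l : Str) (h : x <+: y) : l ++ x <+: l ++ y := by
  obtain ⟨t, rfl⟩ := h
  exact ⟨t, by simp⟩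

lemma mem_WT_iff {r : Str} {q : ℕ → Bool → Str} {t : Str} :
    t ∈ WT r q ↔ ∃ n f, t <+: r ++ Flat q f n := by
  constructor
  · rintro ⟨n, f, h⟩; exact ⟨n+1, f, h⟩
  · rintro ⟨n, f, h⟩
    exact ⟨n, f, h.trans (prefix_append_left r (Flat_mono q f (Nat.le_succ n)))⟩

lemma WT_prefix_closed {r : Str} {q : ℕ → Bool → Str} {t t' : Str}
    (h : t ∈ WT r q) (h' : t' <+: t) : t' ∈ WT r q := by
  obtain ⟨n, f, hp⟩ := h
  exact ⟨n, f, h'.trans hp⟩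

lemma r_mem_WT (r : Str) (q : ℕ → Bool → Str) : r ∈ WT r q :=
  ⟨0, fun _ => false, List.prefix_append _ _⟩

lemma comparable_of_mem_WT {r : Str} {q : ℕ → Bool → Str} {t : Str} (h : t ∈ WT r q) :
    t <+: r ∨ r <+: t := by
  obtain ⟨n, f, hp⟩ := h
  exact List.prefix_or_prefix_of_prefix hp (List.prefix_append _ _)

lemma singleton_prefix_of_head {l : Str} {i : Bool} (h : l.head? = some i) : [i] <+: l := by
  cases l with
  | nil => simp at h
  | cons a l => simp at h; exact ⟨l, by simp [h]⟩

lemma getD_zero_of_head {l : Str} {i : Bool} (h : l.head? = some i) : l.getD 0 false = i := by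
  cases l with
  | nil => simp at h
  | cons a l => simpa using h

lemma rq_mem_WT (r : Str) (q : ℕ → Bool → Str) (i : Bool) : r ++ q 0 i ∈ WT r q :=
  ⟨0, fun _ => i, by rw [Flat_succ, Flat_zero, List.nil_append]⟩

section Wit

variable {T : Tr} {r : Str} {q : ℕ → Bool → Str} (hw : LTwit T r q)
include hw

lemma wit_len (n : ℕ) (i : Bool) : (q n i).length = (q n false).length := by
  cases i
  · rfl
  · exact (hw.1 n).1

lemma wit_pos (n : ℕ) (i : Bool) : 1 ≤ (q n i).length := by
  rw [wit_len hw]; exact (hw.1 n).2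

lemma wit_head (n : ℕ) (i : Bool) : (q n i).getD 0 false = i :=
  getD_zero_of_head (hw.2.1 n i)

lemma wit_T : T = WT r q := hw.2.2

lemma mem_wit_iff {t : Str} : t ∈ T ↔ ∃ n f, t <+: r ++ Flat q f n := by
  rw [wit_T hw]; exact mem_WT_iff

lemma splitting_ge {u : Str} (h0 : u ++ [false] ∈ T) (h1 : u ++ [true] ∈ T) :
    r.length ≤ u.length := by
  by_contra hlt
  push_neg at hlt
  have hval : ∀ j : Bool, u ++ [j] ∈ T → j = r.getD u.length false := by
    intro j hj
    rw [wit_T hw] at hj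
    obtain ⟨n, f, hp⟩ := hj
    have := getD_of_prefix hp (k := u.length) (by simp)
    rw [List.getD_append_right _ _ _ _ (le_refl _), Nat.sub_self,
      List.getD_cons_zero, List.getD_append _ _ _ _ hlt] at this
    exact this
  have h0' := hval false h0
  have h1' := hval true h1
  rw [← h0'] at h1'
  exact Bool.noConfusion h1'

lemma no_mid_split {u : Str} (h0 : u ++ [false] ∈ T) (h1 : u ++ [true] ∈ T) :
    u.length ≤ r.length ∨ r.length + (q 0 false).length ≤ u.length := by
  by_contra hcon
  push_neg at hcon
  obtain ⟨hgt, hlt⟩ := hcon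
  have hval : ∀ j : Bool, u ++ [j] ∈ T →
      j = (q 0 (u.getD r.length false)).getD (u.length - r.length) false := by
    intro j hj
    rw [wit_T hw] at hj
    obtain ⟨n, f, hp⟩ := hj
    rw [Flat_cons, ← List.append_assoc] at hp
    have hq0 := wit_pos hw 0 (f 0)
    have hq0' := wit_len hw 0 (f 0)
    have hf0 : f 0 = u.getD r.length false := by
      have := getD_of_prefix hp (k := r.length) (by simp; omega)
      rw [List.getD_append _ _ _ _ (by omega),
        List.getD_append _ _ _ _ (show r.length < (r ++ q 0 (f 0)).length by simp; omega),
        List.getD_append_right r _ _ _ (le_refl _), Nat.sub_self,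
        wit_head hw 0 (f 0)] at this
      exact this.symm
    have := getD_of_prefix hp (k := u.length) (by simp)
    rw [List.getD_append_right u _ _ _ (le_refl _), Nat.sub_self,
      List.getD_cons_zero,
      List.getD_append _ _ _ _ (show u.length < (r ++ q 0 (f 0)).length by simp; omega),
      List.getD_append_right r _ _ _ (by omega), hf0] at this
    exact this
  have h0' := hval false h0
  have h1' := hval true h1
  rw [← h0'] at h1'
  exact Bool.noConfusion h1'

lemma mem_of_prefix {t t' : Str} (h : t ∈ T) (h' : t' <+: t) : t' ∈ T := by
  rw [wit_T hw] at h ⊢; exact WT_prefix_closed h h'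

lemma r_mem : r ∈ T := by rw [wit_T hw]; exact r_mem_WT r q

lemma rq_mem (i : Bool) : r ++ q 0 i ∈ T := by rw [wit_T hw]; exact rq_mem_WT r q i

lemma comparable_of_mem {t : Str} (h : t ∈ T) : t <+: r ∨ r <+: t := by
  rw [wit_T hw] at h; exact comparable_of_mem_WT h

end Wit


section Wit2

variable {T : Tr} {r : Str} {q : ℕ → Bool → Str} (hw : LTwit T r q)
include hw

lemma restr_stem : restr T r = T := by
  ext x
  constructor
  · exact fun hx => hx.1
  · exact fun hx => ⟨hx, (comparable_of_mem hw hx).symm⟩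

lemma stem_spec : stem T = r := by
  have hpred : r ∈ T ∧ restr T r = T ∧ ∀ t ∈ T, restr T t = T → t.length ≤ r.length := by
    refine ⟨r_mem hw, restr_stem hw, ?_⟩
    intro t ht hres
    by_contra hlen
    push_neg at hlen
    have hrt : r <+: t := by
      rcases comparable_of_mem hw ht with h | h
      · exact absurd h.length_le (by omega)
      · exact h
    have hx : r ++ q 0 (!(t.getD r.length false)) ∈ T := rq_mem hw _
    have hxc : t <+: r ++ q 0 (!(t.getD r.length false)) ∨
        r ++ q 0 (!(t.getD r.length false)) <+: t := by
      have : r ++ q 0 (!(t.getD r.length false)) ∈ restr T t := hres.symm ▸ hx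
      exact this.2
    have hxval : (r ++ q 0 (!(t.getD r.length false))).getD r.length false
        = !(t.getD r.length false) := by
      rw [List.getD_append_right r _ _ _ (le_refl _), Nat.sub_self, wit_head hw]
    have : t.getD r.length false = !(t.getD r.length false) := by
      rcases hxc with h | h
      · exact (getD_of_prefix h hlen).trans hxval
      · have hR := getD_of_prefix h
          (show r.length < (r ++ q 0 (!(t.getD r.length false))).length by
            have := wit_pos hw 0 (!(t.getD r.length false))
            rw [List.length_append]; omega)
        exact hR.symm.trans hxval
    simp at this
  have hex : ∃ s, s ∈ T ∧ restr T s = T ∧ ∀ t ∈ T, restr T t = T → t.length ≤ s.length :=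
    ⟨r, hpred⟩
  have hst : (stem T) ∈ T ∧ restr T (stem T) = T ∧
      ∀ t ∈ T, restr T t = T → t.length ≤ (stem T).length :=
    Classical.epsilon_spec hex
  have h1 : (stem T).length ≤ r.length := hpred.2.2 _ hst.1 hst.2.1
  have h2 : r.length ≤ (stem T).length := hst.2.2 r hpred.1 hpred.2.1
  have hcomp := comparable_of_mem hw hst.1
  rcases hcomp with h | h
  · exact h.eq_of_length (by omega)
  · exact (h.eq_of_length (by omega)).symm

lemma split1_wit (i : Bool) :
    LTwit (split1 T i) (r ++ q 0 i) (fun k => q (k+1)) := by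
  have hq0 : [i] <+: q 0 i := singleton_prefix_of_head (hw.2.1 0 i)
  refine ⟨fun n => hw.1 (n+1), fun n j => hw.2.1 (n+1) j, ?_⟩
  have hs : split1 T i = restr T (r ++ [i]) := by rw [split1, stem_spec hw]
  rw [hs]
  ext x
  constructor
  · rintro ⟨hxT, hcomp⟩
    rcases hcomp with h | h
    · -- r ++ [i] <+: x
      rw [wit_T hw] at hxT
      obtain ⟨n, f, hp⟩ := hxT
      rw [Flat_cons, ← List.append_assoc] at hp
      have hlen : r.length < x.length := by
        have := h.length_le; simp at this; omega
      have hf0 : f 0 = i := by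
        have h1 := getD_of_prefix hp hlen
        have h2 := getD_of_prefix h (show r.length < (r ++ [i]).length by simp)
        rw [List.getD_append_right r _ _ _ (le_refl _), Nat.sub_self,
          List.getD_cons_zero] at h2
        rw [List.getD_append _ _ _ _
            (show r.length < (r ++ q 0 (f 0)).length by
              have := wit_pos hw 0 (f 0); simp; omega),
          List.getD_append_right r _ _ _ (le_refl _), Nat.sub_self,
          wit_head hw 0 (f 0)] at h1
        exact h1.symm.trans h2.symm
      rw [hf0] at hp
      exact mem_WT_iff.2 ⟨n, fun k => f (k+1), hp⟩
    · -- x <+: r ++ [i]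
      refine mem_WT_iff.2 ⟨0, fun _ => i, ?_⟩
      rw [Flat_zero, List.append_nil]
      exact h.trans (prefix_append_left r hq0)
  · intro hx
    obtain ⟨n, f, hp⟩ := mem_WT_iff.1 hx
    set g : ℕ → Bool := fun k => if k = 0 then i else f (k-1) with hg
    have hflat : r ++ Flat q g (n+1) = (r ++ q 0 i) ++ Flat (fun k => q (k+1)) f n := by
      have e0 : g 0 = i := by simp [hg]
      have e1 : Flat (fun k => q (k+1)) (fun k => g (k+1)) n
          = Flat (fun k => q (k+1)) f n := Flat_congr fun k _ => by simp [hg]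
      rw [Flat_cons, e0, e1, List.append_assoc]
    have hxT : x ∈ T := by
      rw [wit_T hw]
      exact ⟨n, g, by rw [hflat]; exact hp⟩
    refine ⟨hxT, ?_⟩
    have h1 : r ++ [i] <+: (r ++ q 0 i) ++ Flat (fun k => q (k+1)) f n :=
      (prefix_append_left r hq0).trans (List.prefix_append _ _)
    exact (List.prefix_or_prefix_of_prefix hp h1).symm

end Wit2

/-- Stems of iterated splittings. -/
def Ext (q : ℕ → Bool → Str) (u : Str) : Str :=
  Flat q (fun k => u.getD k false) u.length

@[simp] lemma Ext_nil (q : ℕ → Bool → Str) : Ext q [] = [] := by simp [Ext]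

lemma Ext_cons (q : ℕ → Bool → Str) (i : Bool) (v : Str) :
    Ext q (i :: v) = q 0 i ++ Ext (fun k => q (k+1)) v := by
  unfold Ext
  rw [List.length_cons, Flat_cons]
  rfl

lemma Ext_snoc (q : ℕ → Bool → Str) (v : Str) (i : Bool) :
    Ext q (v ++ [i]) = Ext q v ++ q v.length i := by
  unfold Ext
  rw [List.length_append, List.length_singleton, Flat_succ]
  congr 1
  · exact Flat_congr fun k hk => by rw [List.getD_append _ _ _ _ hk]
  · rw [List.getD_append_right _ _ _ _ (le_refl _), Nat.sub_self, List.getD_cons_zero]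

lemma Ext_congr {q q' : ℕ → Bool → Str} {u : Str}
    (h : ∀ k < u.length, ∀ j, q k j = q' k j) : Ext q u = Ext q' u :=
  Flat_congr fun k hk => h k hk _

lemma splitS_wit {T : Tr} {r : Str} {q : ℕ → Bool → Str} (u : Str) (hw : LTwit T r q) :
    LTwit (splitS T u) (r ++ Ext q u) (fun k => q (k + u.length)) := by
  induction u generalizing T r q with
  | nil => simpa [splitS] using hw
  | cons i v ih =>
    rw [show r ++ Ext q (i :: v) = (r ++ q 0 i) ++ Ext (fun k => q (k+1)) v from by
      rw [Ext_cons, List.append_assoc]]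
    exact ih (split1_wit hw i)

lemma splitS_subset (T : Tr) (u : Str) : splitS T u ⊆ T := by
  induction u generalizing T with
  | nil => exact fun x hx => hx
  | cons i v ih =>
    intro x hx
    exact (ih (split1 T i) hx).1

lemma splitS_mem {P' : Set Tr} (hP' : IsLTF P') {T : Tr} {r : Str} {q : ℕ → Bool → Str}
    (u : Str) (hw : LTwit T r q) (hT : T ∈ P') : splitS T u ∈ P' := by
  induction u generalizing T r q with
  | nil => exact hT
  | cons i v ih =>
    have h1 : split1 T i ∈ P' := by
      rw [split1, stem_spec hw]
      exact hP'.2.1 T hT (r ++ [i])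
        (mem_of_prefix hw (rq_mem hw i)
          (prefix_append_left r (singleton_prefix_of_head (hw.2.1 0 i))))
    exact ih (split1_wit hw i) h1

lemma shift_wit {T : Tr} {r : Str} {q : ℕ → Bool → Str} (hw : LTwit T r q)
    (μ : Str) (hμ : μ.length ≤ r.length) : LTwit (actT μ T) (act μ r) q := by
  refine ⟨hw.1, hw.2.1, ?_⟩
  ext x
  constructor
  · rintro ⟨y, hy, rfl⟩
    obtain ⟨n, f, hp⟩ := mem_wit_iff hw |>.1 hy
    refine mem_WT_iff.2 ⟨n, f, ?_⟩
    have := act_prefix μ hp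
    rwa [act_append _ hμ] at this
  · intro hx
    obtain ⟨n, f, hp⟩ := mem_WT_iff.1 hx
    refine ⟨act μ x, ?_, act_act_self μ x⟩
    refine (mem_wit_iff hw).2 ⟨n, f, ?_⟩
    have := act_prefix μ hp
    rwa [act_append _ (by simpa using hμ), act_act_self] at this


lemma wit_stem_eq {T : Tr} {r r' : Str} {q q' : ℕ → Bool → Str}
    (hw : LTwit T r q) (hw' : LTwit T r' q') : r = r' := by
  have hsplit : ∀ (j : Bool), r' ++ [j] ∈ T := fun j =>
    mem_of_prefix hw' (rq_mem hw' j)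
      (prefix_append_left r' (singleton_prefix_of_head (hw'.2.1 0 j)))
  have hsplit' : ∀ (j : Bool), r ++ [j] ∈ T := fun j =>
    mem_of_prefix hw (rq_mem hw j)
      (prefix_append_left r (singleton_prefix_of_head (hw.2.1 0 j)))
  have h1 : r.length ≤ r'.length := splitting_ge hw (hsplit false) (hsplit true)
  have h2 : r'.length ≤ r.length := splitting_ge hw' (hsplit' false) (hsplit' true)
  rcases comparable_of_mem hw (r_mem hw') with h | h
  · exact (h.eq_of_length (by omega)).symm
  · exact h.eq_of_length (by omega)

lemma wit_q0_len_le {T : Tr} {r : Str} {q q' : ℕ → Bool → Str}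
    (hw : LTwit T r q) (hw' : LTwit T r q') :
    (q' 0 false).length ≤ (q 0 false).length := by
  have hsplit : ∀ (j : Bool), (r ++ q 0 false) ++ [j] ∈ T := by
    intro j
    refine (mem_wit_iff hw).2 ⟨2, fun k => if k = 0 then false else j, ?_⟩
    rw [Flat_succ, Flat_succ, Flat_zero, List.nil_append]
    simp only [if_pos rfl, if_neg one_ne_zero]
    rw [List.append_assoc]
    exact prefix_append_left r
      (prefix_append_left _ (singleton_prefix_of_head (hw.2.1 1 j)))
  have := no_mid_split hw' (hsplit false) (hsplit true)
  have hpos := wit_pos hw 0 false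
  rcases this with h | h
  · rw [List.length_append] at h; omega
  · rw [List.length_append] at h; omega

lemma wit_len_all {T : Tr} {r r' : Str} {q q' : ℕ → Bool → Str} (k : ℕ)
    (hw : LTwit T r q) (hw' : LTwit T r' q') :
    (q k false).length = (q' k false).length := by
  induction k generalizing T r r' q q' with
  | zero =>
    obtain rfl := wit_stem_eq hw hw'
    exact le_antisymm (wit_q0_len_le hw' hw) (wit_q0_len_le hw hw')
  | succ k ih =>
    exact ih (split1_wit hw false) (split1_wit hw' false)

lemma splN_inv {T : Tr} {r r' : Str} {q q' : ℕ → Bool → Str}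
    (hw : LTwit T r q) (hw' : LTwit T r' q') (k : ℕ) :
    splN r q k = splN r' q' k := by
  induction k with
  | zero => exact congrArg List.length (wit_stem_eq hw hw')
  | succ k ih => rw [splN, splN, ih, wit_len_all k hw hw']

lemma spl_eq {T : Tr} {r : Str} {q : ℕ → Bool → Str} (hw : LTwit T r q) (k : ℕ) :
    spl T k = splN r q k := by
  have hex : ∃ rq : Str × (ℕ → Bool → Str), LTwit T rq.1 rq.2 := ⟨(r, q), hw⟩
  have hwit : LTwit T (witness T).1 (witness T).2 := Classical.epsilon_spec hex
  exact splN_inv hwit hw k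

lemma len_r_Ext {T : Tr} {r : Str} {q : ℕ → Bool → Str} (hw : LTwit T r q) (u : Str) :
    (r ++ Ext q u).length = splN r q u.length := by
  induction u using List.reverseRecOn with
  | nil => simp [splN]
  | append_singleton v i ih =>
    rw [Ext_snoc, ← List.append_assoc]
    simp only [List.length_append, List.length_singleton]
    simp only [List.length_append] at ih
    rw [splN, ← ih, wit_len hw v.length i]

lemma Flat_len_ge {T : Tr} {r : Str} {q : ℕ → Bool → Str} (hw : LTwit T r q)
    (f : ℕ → Bool) (m : ℕ) : m ≤ (Flat q f m).length := by
  induction m with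
  | zero => simp
  | succ m ih =>
    rw [Flat_succ, List.length_append]
    have := wit_pos hw m (f m)
    omega

lemma mem_splitS_of_mem {T : Tr} {r : Str} {q : ℕ → Bool → Str} (hw : LTwit T r q)
    {x : Str} (hx : x ∈ T) (m : ℕ) :
    ∃ u : Str, u.length = m ∧ x ∈ splitS T u := by
  obtain ⟨nn, g, hp⟩ := (mem_wit_iff hw).1 hx
  have hp' : x <+: r ++ Flat q g (m + nn) :=
    hp.trans (prefix_append_left r (Flat_mono q g (by omega)))
  rw [Flat_add, ← List.append_assoc] at hp'
  refine ⟨List.ofFn (fun k : Fin m => g k), by simp, ?_⟩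
  have hExt : Ext q (List.ofFn (fun k : Fin m => g k)) = Flat q g m := by
    unfold Ext
    rw [List.length_ofFn]
    refine Flat_congr fun k hk => ?_
    congr 1
    rw [List.getD_eq_getElem _ _ (by simpa using hk), List.getElem_ofFn]
  have hwS := splitS_wit (List.ofFn (fun k : Fin m => g k)) hw
  refine (mem_wit_iff hwS).2 ⟨nn, fun k => g (k + m), ?_⟩
  rw [hExt]
  rw [show (List.ofFn (fun k : Fin m => g k)).length = m from by simp]
  exact hp'


lemma boolX : ∀ a b c : Bool, xor a b = xor (xor a (xor c b)) c := by decide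

lemma boolY : ∀ s r : Bool, xor (xor s r) r = s := by decide

lemma prefix_of_comp {x y : Str} (h : x <+: y ∨ y <+: x) (hl : x.length ≤ y.length) :
    x <+: y := by
  rcases h with h | h
  · exact h
  · rw [h.eq_of_length (le_antisymm h.length_le hl)]

lemma head?_append_left {l l' : Str} {i : Bool} (h : l.head? = some i) :
    (l ++ l').head? = some i := by
  cases l with
  | nil => simp at h
  | cons a l => simpa using h

lemma wit_unique {A B : Tr} {r : Str} {q : ℕ → Bool → Str}
    (h1 : LTwit A r q) (h2 : LTwit B r q) : A = B :=
  (wit_T h1).trans (wit_T h2).symm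

lemma actT_branch {W X1 X2 : Tr} {C1 C2 : Str} {q1 : ℕ → Bool → Str}
    (hw1 : LTwit X1 C1 q1) (hw2 : LTwit X2 C2 q1) (hlen : C2.length = C1.length)
    (hW : W ⊆ X1) : actT (act C2 C1) W ⊆ X2 := by
  have h2 := shift_wit hw1 (act C2 C1) (by rw [act_length])
  rw [act_act_self' hlen] at h2
  intro x hx
  rw [← wit_unique h2 hw2]
  exact actT_mono _ hW hx

lemma main_aux {P' : Set Tr} (hP' : IsLTF P') {n : ℕ} {P S' : Tr}
    {rP rS' : Str} {qP qS' : ℕ → Bool → Str}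
    (hwP : LTwit P rP qP) (hwS' : LTwit S' rS' qS')
    (hS'mem : S' ∈ P') {s t : Str} (hs : s.length = n) (ht : t.length = n)
    {σ : Str} (hσlen : σ.length ≤ rS'.length)
    (hsub0 : S' ⊆ splitS P (s ++ [false]))
    (hsub1 : actT σ S' ⊆ splitS P (t ++ [true])) :
    ∃ Q : Tr, IsCollage P' (n+1) Q ∧ subN (n+1) Q P ∧
      splitS Q (s ++ [false]) ⊆ S' ∧ splitS Q (t ++ [true]) ⊆ actT σ S' := by
  classical
  obtain ⟨L, hLdef⟩ : ∃ L : ℕ, L = splN rP qP (n+1) := ⟨_, rfl⟩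
  obtain ⟨N, hNdef⟩ : ∃ N : ℕ, N = rS'.length := ⟨_, rfl⟩
  obtain ⟨tail0, ht0⟩ : ∃ u : Str, u = rS'.drop L := ⟨_, rfl⟩
  obtain ⟨x1, hx1⟩ : ∃ u : Str, u = act σ rS' := ⟨_, rfl⟩
  obtain ⟨tail1, ht1⟩ : ∃ u : Str, u = x1.drop L := ⟨_, rfl⟩
  have hσN : σ.length ≤ N := by rw [hNdef]; exact hσlen
  have hwPvi : ∀ (v : Str) (i : Bool), v.length = n →
      LTwit (splitS P (v ++ [i])) (rP ++ Ext qP (v ++ [i])) (fun k => qP (k + (n+1))) := by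
    intro v i hv
    have h := splitS_wit (v ++ [i]) hwP
    rwa [show (v ++ [i]).length = n + 1 by simp [hv]] at h
  have hstemlen : ∀ (v : Str) (i : Bool), v.length = n →
      (rP ++ Ext qP (v ++ [i])).length = L := by
    intro v i hv
    rw [len_r_Ext hwP, show (v ++ [i]).length = n + 1 by simp [hv]]
    exact hLdef.symm
  have hLN : L ≤ N := by
    have h0 : ∀ j : Bool, rS' ++ [j] ∈ splitS P (s ++ [false]) := fun j =>
      hsub0 (mem_of_prefix hwS' (rq_mem hwS' j)
        (prefix_append_left _ (singleton_prefix_of_head (hwS'.2.1 0 j))))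
    have := splitting_ge (hwPvi s false hs) (h0 false) (h0 true)
    rw [hstemlen s false hs] at this
    omega
  have hApre : rP ++ Ext qP (s ++ [false]) <+: rS' := by
    refine prefix_of_comp (comparable_of_mem (hwPvi s false hs) (hsub0 (r_mem hwS'))).symm ?_
    rw [hstemlen s false hs, ← hNdef]; exact hLN
  have hsplit0 : (rP ++ Ext qP (s ++ [false])) ++ tail0 = rS' := by
    have hA := List.prefix_iff_eq_take.1 hApre
    rw [hstemlen s false hs] at hA
    rw [hA, ht0]
    exact List.take_append_drop _ _
  have hx1mem : x1 ∈ splitS P (t ++ [true]) := by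
    rw [hx1]; exact hsub1 ⟨rS', r_mem hwS', rfl⟩
  have hx1len : x1.length = N := by rw [hx1, act_length, hNdef]
  have hBpre : rP ++ Ext qP (t ++ [true]) <+: x1 := by
    refine prefix_of_comp (comparable_of_mem (hwPvi t true ht) hx1mem).symm ?_
    rw [hstemlen t true ht, hx1len]; exact hLN
  have hsplit1 : (rP ++ Ext qP (t ++ [true])) ++ tail1 = x1 := by
    have hB := List.prefix_iff_eq_take.1 hBpre
    rw [hstemlen t true ht] at hB
    rw [hB, ht1]
    exact List.take_append_drop _ _
  have hlent0 : tail0.length = N - L := by rw [ht0, List.length_drop, ← hNdef]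
  have hlent1 : tail1.length = N - L := by rw [ht1, List.length_drop, hx1len]
  have hgetr : ∀ k, L ≤ k → rS'.getD k false = tail0.getD (k - L) false := by
    intro k hk
    conv_lhs => rw [← hsplit0]
    rw [List.getD_append_right _ _ _ _ (by rw [hstemlen s false hs]; exact hk),
      hstemlen s false hs]
  have hgetx1 : ∀ k, L ≤ k → x1.getD k false = tail1.getD (k - L) false := by
    intro k hk
    conv_lhs => rw [← hsplit1]
    rw [List.getD_append_right _ _ _ _ (by rw [hstemlen t true ht]; exact hk),
      hstemlen t true ht]
  have hgetx1' : ∀ k, x1.getD k false = xor (σ.getD k false) (rS'.getD k false) := by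
    intro k
    by_cases hk : k < N
    · rw [hx1]; exact getD_act σ rS' k (by rw [← hNdef]; exact hk)
    · push_neg at hk
      rw [getD_long x1 (by rw [hx1len]; exact hk), getD_long σ (le_trans hσN hk),
        getD_long rS' (by rw [← hNdef]; exact hk)]
      rfl
  -- the new witness function
  obtain ⟨qQ, hqQ⟩ : ∃ qQ : ℕ → Bool → Str, qQ = fun k i =>
      if k < n then qP k i
      else if k = n then qP n i ++ (if i then tail1 else tail0)
      else qS' (k - (n+1)) i := ⟨_, rfl⟩
  have hqQlt : ∀ k, k < n → ∀ i, qQ k i = qP k i := by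
    intro k hk i; rw [hqQ]; simp only [if_pos hk]
  have hqQn : ∀ i, qQ n i = qP n i ++ (if i then tail1 else tail0) := by
    intro i; rw [hqQ]
    simp only [if_neg (lt_irrefl n), eq_self_iff_true, if_true]
  have hqQgt : ∀ k, qQ (k + (n+1)) = qS' k := by
    intro k; funext i; rw [hqQ]
    simp only [if_neg (by omega : ¬ k + (n+1) < n), if_neg (by omega : ¬ k + (n+1) = n)]
    rw [Nat.add_sub_cancel]
  have hwQ : LTwit (WT rP qQ) rP qQ := by
    refine ⟨?_, ?_, rfl⟩
    · intro k
      rcases lt_trichotomy k n with h | rfl | h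
      · rw [hqQlt k h true, hqQlt k h false]; exact hwP.1 k
      · rw [hqQn true, hqQn false]
        refine ⟨?_, ?_⟩
        · rw [if_pos rfl, if_neg Bool.false_ne_true, List.length_append, List.length_append,
            hlent0, hlent1, (hwP.1 k).1]
        · have := (hwP.1 k).2
          rw [if_neg Bool.false_ne_true, List.length_append]
          omega
      · have hk : k = (k - (n+1)) + (n+1) := by omega
        rw [hk, hqQgt]
        exact hwS'.1 _
    · intro k i
      rcases lt_trichotomy k n with h | rfl | h
      · rw [hqQlt k h i]; exact hwP.2.1 k i
      · rw [hqQn i]; exact head?_append_left (hwP.2.1 k i)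
      · have hk : k = (k - (n+1)) + (n+1) := by omega
        rw [hk, hqQgt]
        exact hwS'.2.1 _ i
  -- key identification of the (n+1)-splittings of Q
  have key : ∀ (v : Str) (i : Bool), v.length = n →
      splitS (WT rP qQ) (v ++ [i]) =
        actT (act ((rP ++ Ext qP (v ++ [i])) ++ (if i then tail1 else tail0)) rS') S' := by
    intro v i hv
    have hExtQ : Ext qQ (v ++ [i]) = Ext qP (v ++ [i]) ++ (if i then tail1 else tail0) := by
      rw [Ext_snoc qQ v i, Ext_snoc qP v i, hv,
        show Ext qQ v = Ext qP v from Ext_congr (fun k hk j => hqQlt k (by omega) j),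
        hqQn i, List.append_assoc]
    have hρlen : ((rP ++ Ext qP (v ++ [i])) ++ (if i then tail1 else tail0)).length = N := by
      rw [List.length_append, hstemlen v i hv]
      cases i
      · rw [if_neg Bool.false_ne_true, hlent0]; omega
      · rw [if_pos rfl, hlent1]; omega
    have hwQu : LTwit (splitS (WT rP qQ) (v ++ [i]))
        ((rP ++ Ext qP (v ++ [i])) ++ (if i then tail1 else tail0)) qS' := by
      have h := splitS_wit (v ++ [i]) hwQ
      rw [show (v ++ [i]).length = n + 1 by simp [hv]] at h
      rw [show (fun k => qQ (k + (n+1))) = qS' from funext hqQgt] at h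
      rwa [hExtQ, ← List.append_assoc] at h
    have hwA : LTwit
        (actT (act ((rP ++ Ext qP (v ++ [i])) ++ (if i then tail1 else tail0)) rS') S')
        ((rP ++ Ext qP (v ++ [i])) ++ (if i then tail1 else tail0)) qS' := by
      have h := shift_wit hwS'
        (act ((rP ++ Ext qP (v ++ [i])) ++ (if i then tail1 else tail0)) rS')
        (by rw [act_length])
      rwa [act_act_self' (by rw [hρlen, hNdef])] at h
    exact wit_unique hwQu hwA
  -- branch congruences
  have hcong0 : ∀ (v : Str), v.length = n → ∀ x : Str,
      act (act ((rP ++ Ext qP (v ++ [false])) ++ tail0) rS') x =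
      act (act (rP ++ Ext qP (v ++ [false])) (rP ++ Ext qP (s ++ [false]))) x := by
    intro v hv x
    apply act_ext
    intro k
    rw [getD_act' _ _ _ (by
        rw [List.length_append, hstemlen v false hv, hlent0, ← hNdef]; omega),
      getD_act' _ _ _ (by rw [hstemlen v false hv, hstemlen s false hs])]
    by_cases hk : k < L
    · rw [List.getD_append _ _ _ _ (by rw [hstemlen v false hv]; exact hk),
        show rS'.getD k false = (rP ++ Ext qP (s ++ [false])).getD k false from by
          conv_lhs => rw [← hsplit0]
          rw [List.getD_append _ _ _ _ (by rw [hstemlen s false hs]; exact hk)]]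
    · push_neg at hk
      rw [List.getD_append_right _ _ _ _ (by rw [hstemlen v false hv]; exact hk),
        hstemlen v false hv, hgetr k hk, Bool.xor_self,
        getD_long (rP ++ Ext qP (v ++ [false])) (by rw [hstemlen v false hv]; exact hk),
        getD_long (rP ++ Ext qP (s ++ [false])) (by rw [hstemlen s false hs]; exact hk),
        Bool.xor_self]
  have hcong1 : ∀ (v : Str), v.length = n → ∀ x : Str,
      act (act ((rP ++ Ext qP (v ++ [true])) ++ tail1) rS') x =
      act (act (rP ++ Ext qP (v ++ [true])) (rP ++ Ext qP (t ++ [true]))) (act σ x) := by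
    intro v hv x
    apply act_act_eq
    intro k
    rw [getD_act' _ _ _ (by
        rw [List.length_append, hstemlen v true hv, hlent1, ← hNdef]; omega)]
    rcases lt_or_ge k L with hk | hk
    · rw [getD_act' _ _ _ (by rw [hstemlen v true hv, hstemlen t true ht]),
        List.getD_append _ _ _ _ (by rw [hstemlen v true hv]; exact hk),
        show (rP ++ Ext qP (t ++ [true])).getD k false
            = xor (σ.getD k false) (rS'.getD k false) from by
          rw [getD_of_prefix hBpre (by rw [hstemlen t true ht]; exact hk), hgetx1' k]]
      exact boolX _ _ _
    · rcases lt_or_ge k N with hk2 | hk2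
      · rw [List.getD_append_right _ _ _ _ (by rw [hstemlen v true hv]; exact hk),
          hstemlen v true hv, ← hgetx1 k hk, hgetx1' k, boolY,
          getD_long (act (rP ++ Ext qP (v ++ [true])) (rP ++ Ext qP (t ++ [true])))
            (by rw [act_length, hstemlen t true ht]; exact hk),
          Bool.false_xor]
      · rw [getD_long (act (rP ++ Ext qP (v ++ [true])) (rP ++ Ext qP (t ++ [true])))
            (by rw [act_length, hstemlen t true ht]; omega),
          getD_long σ (le_trans hσN hk2),
          getD_long (rP ++ Ext qP (v ++ [true]) ++ tail1) (by
            rw [List.length_append, hstemlen v true hv, hlent1]; omega),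
          getD_long rS' (by rw [← hNdef]; exact hk2)]
  -- each splitting of Q is inside the corresponding splitting of P
  have keysub : ∀ (v : Str) (i : Bool), v.length = n →
      splitS (WT rP qQ) (v ++ [i]) ⊆ splitS P (v ++ [i]) := by
    intro v i hv
    rw [key v i hv]
    cases i
    · rw [if_neg Bool.false_ne_true]
      rw [show actT (act ((rP ++ Ext qP (v ++ [false])) ++ tail0) rS') S'
          = actT (act (rP ++ Ext qP (v ++ [false])) (rP ++ Ext qP (s ++ [false]))) S' from
        Set.image_congr fun x _ => hcong0 v hv x]
      exact actT_branch (hwPvi s false hs) (hwPvi v false hv)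
        (by rw [hstemlen v false hv, hstemlen s false hs]) hsub0
    · rw [if_pos rfl]
      rw [show actT (act ((rP ++ Ext qP (v ++ [true])) ++ tail1) rS') S'
          = actT (act (rP ++ Ext qP (v ++ [true])) (rP ++ Ext qP (t ++ [true]))) (actT σ S')
          from by
        unfold actT
        rw [← Set.image_comp]
        exact Set.image_congr fun x _ => hcong1 v hv x]
      exact actT_branch (hwPvi t true ht) (hwPvi v true hv)
        (by rw [hstemlen v true hv, hstemlen t true ht]) hsub1
  refine ⟨WT rP qQ, ⟨⟨rP, qQ, hwQ⟩, ?_⟩, ⟨?_, ?_⟩, ?_, ?_⟩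
  · -- (n+1)-collage
    intro u hu
    induction u using List.reverseRecOn with
    | nil => simp at hu
    | append_singleton v i _ =>
      have hv : v.length = n := by
        rw [List.length_append, List.length_singleton] at hu; omega
      rw [key v i hv]
      exact hP'.2.2 S' hS'mem _
  · -- Q ⊆ P
    intro x hx
    obtain ⟨u, hu, hxu⟩ := mem_splitS_of_mem hwQ hx (n+1)
    induction u using List.reverseRecOn with
    | nil => simp at hu
    | append_singleton v i _ =>
      have hv : v.length = n := by
        rw [List.length_append, List.length_singleton] at hu; omega
      exact splitS_subset P (v ++ [i]) (keysub v i hv hxu)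
  · -- splitting levels agree below n+1
    intro k hk
    rw [spl_eq hwQ k, spl_eq hwP k]
    have haux : ∀ j, j ≤ n → splN rP qQ j = splN rP qP j := by
      intro j
      induction j with
      | zero => intro _; rfl
      | succ j ih =>
        intro hj
        show splN rP qQ j + (qQ j false).length = splN rP qP j + (qP j false).length
        rw [ih (by omega), hqQlt j (by omega) false]
    exact haux k (by omega)
  · -- left branch below S'
    rw [key s false hs, if_neg Bool.false_ne_true, hsplit0]
    have hzero : ∀ k, (act rS' rS').getD k false = false := by
      intro k
      by_cases hk : k < rS'.length
      · rw [getD_act' _ _ _ rfl, Bool.xor_self]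
      · exact getD_long _ (by rw [act_length]; omega)
    rintro x ⟨y, hy, rfl⟩
    rwa [act_zero y hzero]
  · -- right branch below σ·S'
    rw [key t true ht, if_pos rfl, hsplit1]
    have hsig : ∀ k, (act x1 rS').getD k false = σ.getD k false := by
      intro k
      by_cases hk : k < N
      · rw [getD_act' _ _ _ (by rw [hx1len, hNdef]), hgetx1' k, boolY]
      · push_neg at hk
        rw [getD_long _ (by rw [act_length, ← hNdef]; exact hk),
          getD_long σ (le_trans hσN hk)]
    rintro x ⟨y, hy, rfl⟩
    exact ⟨y, hy, (act_ext y hsig).symm⟩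

/-- Lemma `stf`(3): let `P'` be a large-tree forcing notion, `P` an
`n`-collage over `P'`, `S, T ∈ P'`, `s, t ∈ 2^n`, `S ⊆ P→(s⌢0)`, `T ⊆ P→(t⌢1)`, and
`T = σ·S`. Then there is an `(n+1)`-collage `Q` over `P'` with `Q ⊆_{n+1} P`,
`Q→(s⌢0) ⊆ S`, and `Q→(t⌢1) ⊆ T`. -/
theorem stmt15 (P' : Set Tr) (hP' : IsLTF P') (n : ℕ) (P : Tr) (hP : IsCollage P' n P)
    (S T : Tr) (hS : S ∈ P') (hT : T ∈ P')
    (s t : Str) (hs : s.length = n) (ht : t.length = n)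
    (hS0 : S ⊆ splitS P (s ++ [false])) (hT1 : T ⊆ splitS P (t ++ [true]))
    (σ : Str) (hσ : T = actT σ S) :
    ∃ Q : Tr, IsCollage P' (n+1) Q ∧ subN (n+1) Q P ∧
      splitS Q (s ++ [false]) ⊆ S ∧ splitS Q (t ++ [true]) ⊆ T := by
  obtain ⟨rP, qP, hwP⟩ := hP.1
  obtain ⟨rS, qS, hwS⟩ := hP'.1 S hS
  have hwS' := splitS_wit (List.replicate σ.length false) hwS
  have hσlen : σ.length ≤ (rS ++ Ext qS (List.replicate σ.length false)).length := by
    rw [List.length_append]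
    have h1 : (List.replicate σ.length false).length
        ≤ (Ext qS (List.replicate σ.length false)).length :=
      Flat_len_ge hwS _ _
    rw [List.length_replicate] at h1
    omega
  have hS'sub : splitS S (List.replicate σ.length false) ⊆ S := splitS_subset S _
  have hS'mem : splitS S (List.replicate σ.length false) ∈ P' :=
    splitS_mem hP' _ hwS hS
  have hsub0 : splitS S (List.replicate σ.length false) ⊆ splitS P (s ++ [false]) :=
    fun x hx => hS0 (hS'sub hx)
  have hsub1 : actT σ (splitS S (List.replicate σ.length false)) ⊆ splitS P (t ++ [true]) := by
    intro x hx
    exact hT1 (hσ ▸ actT_mono σ hS'sub hx)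
  obtain ⟨Q, h1, h2, h3, h4⟩ := main_aux hP' hwP hwS' hS'mem hs ht hσlen hsub0 hsub1
  refine ⟨Q, h1, h2, fun x hx => hS'sub (h3 hx), fun x hx => ?_⟩
  rw [hσ]
  exact actT_mono σ hS'sub (h4 hx)

end E0L
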